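/- Let n ≥ 1 and let U_n be the n×n block matrix whose (1,1) entry is 1/√n, whose first row and first column off-diagonal blocks are (√(n−1)/√n)·e_{n-1}^T and (√(n−1)/√n)·e_{n-1} (where e_{n-1} ∈ ℝ^{n-1} has every entry 1/√(n-1)), and whose lower-right (n−1)×(n−1) block is V_{n-1} = I_{n-1} − (1 + 1/√n)·J_{n-1}. Then for every real (n−1)×(n−1) matrix X, the matrix U_n · (1 ⊕ X) · U_n has all row sums and all column sums equal to 1, where 1 ⊕ X denotes the n×n block-diagonal matrix with (1,1) entry 1 and lower-right block X. -/

import Mathlib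

/-- The matrix `U_n` (with `n = m+1`): block matrix with `(1,1)` entry `1/√n`,
first row/column off-diagonal blocks `(√(n-1)/√n)·e_{n-1}ᵀ` and `(√(n-1)/√n)·e_{n-1}`
(where `e_{n-1}` has all entries `1/√(n-1)`), and lower-right block
`V_{n-1} = I_{n-1} - (1 + 1/√n)·J_{n-1}`, `J_{n-1}` having all entries `1/(n-1)`. -/
noncomputable def Umat (m : ℕ) : Matrix (Fin (m + 1)) (Fin (m + 1)) ℝ :=
  Matrix.of fun i j =>
    if i = 0 ∧ j = 0 then 1 / Real.sqrt (m + 1)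
    else if i = 0 ∨ j = 0 then Real.sqrt m / Real.sqrt (m + 1) * (1 / Real.sqrt m)
    else (if i = j then (1 : ℝ) else 0) - (1 + 1 / Real.sqrt (m + 1)) * (1 / m)

/-- The block-diagonal matrix `1 ⊕ X`. -/
def oneOplus {m : ℕ} (X : Matrix (Fin m) (Fin m) ℝ) : Matrix (Fin (m + 1)) (Fin (m + 1)) ℝ :=
  Matrix.of fun i j =>
    if hi : i = 0 then (if j = 0 then 1 else 0)
    else if hj : j = 0 then 0 else X (i.pred hi) (j.pred hj)

lemma Umat_symm (m : ℕ) (i j : Fin (m+1)) : Umat m i j = Umat m j i := by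
  simp only [Umat, Matrix.of_apply]
  by_cases hi : i = 0 <;> by_cases hj : j = 0 <;> by_cases hij : i = j <;>
    simp_all [eq_comm, and_comm, or_comm]

lemma Umat_col0 (m : ℕ) (i : Fin (m+1)) : Umat m i 0 = 1 / Real.sqrt (m+1) := by
  rcases eq_or_ne i 0 with h | h
  · subst h; simp [Umat]
  · have hm : 0 < m := by
      rcases Nat.eq_zero_or_pos m with hm0 | hm0
      · subst hm0; exact absurd (Fin.fin_one_eq_zero i) h
      · exact hm0
    have ht : Real.sqrt m ≠ 0 := ne_of_gt (Real.sqrt_pos.2 (by positivity))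
    simp only [Umat, Matrix.of_apply]
    rw [if_neg (fun hc => h hc.1), if_pos (Or.inr trivial)]
    field_simp

lemma rowsum_U (m : ℕ) (k : Fin (m+1)) :
    ∑ j, Umat m k j = if k = 0 then Real.sqrt (m+1) else 0 := by
  have hs : (0:ℝ) < Real.sqrt (m+1) := Real.sqrt_pos.2 (by positivity)
  have hss : Real.sqrt (m+1) * Real.sqrt (m+1) = (m:ℝ)+1 := Real.mul_self_sqrt (by positivity)
  rcases eq_or_ne k 0 with hk | hk
  · subst hk
    rw [if_pos rfl, Fin.sum_univ_succ]
    have h0 : Umat m 0 0 = 1 / Real.sqrt (m+1) := by simp [Umat]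
    rcases Nat.eq_zero_or_pos m with hm | hm
    · subst hm
      simp [Umat, Real.sqrt_one]
    · have ht : (0:ℝ) < Real.sqrt m := Real.sqrt_pos.2 (by positivity)
      have hj : ∀ j : Fin m, Umat m 0 j.succ = 1 / Real.sqrt (m+1) := by
        intro j
        simp only [Umat, Matrix.of_apply]
        rw [if_neg (fun hc => Fin.succ_ne_zero j hc.2), if_pos (Or.inl trivial)]
        field_simp
      rw [h0, Finset.sum_congr rfl (fun j _ => hj j)]
      simp only [Finset.sum_const, Finset.card_univ, Fintype.card_fin, nsmul_eq_mul]
      field_simp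
      ring_nf; rw [Real.sq_sqrt (by positivity)]
  · rw [if_neg hk, Fin.sum_univ_succ]
    have hm : 0 < m := by
      rcases Nat.eq_zero_or_pos m with hm0 | hm0
      · subst hm0; exact absurd (Fin.fin_one_eq_zero k) hk
      · exact hm0
    have ht : (0:ℝ) < Real.sqrt m := Real.sqrt_pos.2 (by positivity)
    have hm' : (0:ℝ) < (m:ℝ) := by positivity
    have h0 : Umat m k 0 = 1 / Real.sqrt (m+1) := Umat_col0 m k
    have hj : ∀ j : Fin m, Umat m k j.succ =
        (if j = k.pred hk then (1:ℝ) else 0) - (1 + 1 / Real.sqrt (m+1)) * (1 / m) := by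
      intro j
      simp only [Umat, Matrix.of_apply]
      rw [if_neg (fun hc => hk hc.1), if_neg (fun hc => hc.elim hk (Fin.succ_ne_zero j))]
      by_cases hkj : j = k.pred hk
      · have hks : k = j.succ := by rw [hkj, Fin.succ_pred]
        rw [if_pos hks, if_pos hkj]
      · have hks : k ≠ j.succ := fun hh => hkj (by simp [hh, Fin.pred_succ])
        rw [if_neg hks, if_neg hkj]
    rw [h0, Finset.sum_congr rfl (fun j _ => hj j), Finset.sum_sub_distrib,
      Finset.sum_ite_eq' Finset.univ (k.pred hk)]
    simp only [Finset.mem_univ, if_pos, Finset.sum_const, Finset.card_univ,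
      Fintype.card_fin, nsmul_eq_mul]
    field_simp
    ring

lemma colsum_U (m : ℕ) (k : Fin (m+1)) :
    ∑ i, Umat m i k = if k = 0 then Real.sqrt (m+1) else 0 := by
  rw [← rowsum_U m k]; exact Finset.sum_congr rfl fun i _ => Umat_symm m i k

/-- For every real `(n-1) × (n-1)` matrix `X` (here `n = m+1 ≥ 1`), the matrix
`Uₙ * (1 ⊕ X) * Uₙ` has all row sums and all column sums equal to `1`. -/
theorem stmt1 (m : ℕ) (X : Matrix (Fin m) (Fin m) ℝ) :
    (∀ i, ∑ j, (Umat m * oneOplus X * Umat m) i j = 1) ∧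
    (∀ j, ∑ i, (Umat m * oneOplus X * Umat m) i j = 1) := by
  have hs0 : Real.sqrt ((m:ℝ)+1) ≠ 0 := ne_of_gt (Real.sqrt_pos.2 (by positivity))
  have hA0 : ∀ k : Fin (m+1), oneOplus X k 0 = if k = 0 then (1:ℝ) else 0 := by
    intro k; rcases eq_or_ne k 0 with h|h <;> simp [oneOplus, h]
  have hA0' : ∀ k : Fin (m+1), oneOplus X 0 k = if k = 0 then (1:ℝ) else 0 := by
    intro k; rcases eq_or_ne k 0 with h|h <;> simp [oneOplus, h]
  constructor
  · intro i
    have h1 : ∑ j, (Umat m * oneOplus X * Umat m) i j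
        = ∑ k, (Umat m * oneOplus X) i k * (∑ j, Umat m k j) := by
      simp_rw [Matrix.mul_apply, Finset.mul_sum]
      exact Finset.sum_comm
    rw [h1]
    simp_rw [rowsum_U, mul_ite, mul_zero]
    rw [Finset.sum_ite_eq' Finset.univ (0 : Fin (m+1))]
    simp only [Finset.mem_univ, if_pos]
    have hA : (Umat m * oneOplus X) i 0 = Umat m i 0 := by
      rw [Matrix.mul_apply]
      simp_rw [hA0, mul_ite, mul_one, mul_zero]
      rw [Finset.sum_ite_eq' Finset.univ (0:Fin (m+1))]
      simp
    rw [hA, Umat_col0]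
    rw [one_div_mul_cancel hs0]
  · intro j
    have h1 : ∑ i, (Umat m * oneOplus X * Umat m) i j
        = ∑ k, (∑ i, Umat m i k) * (oneOplus X * Umat m) k j := by
      rw [Matrix.mul_assoc]
      simp_rw [Matrix.mul_apply, Finset.sum_mul]
      exact Finset.sum_comm
    rw [h1]
    simp_rw [colsum_U, ite_mul, zero_mul]
    rw [Finset.sum_ite_eq' Finset.univ (0 : Fin (m+1))]
    simp only [Finset.mem_univ, if_pos]
    have hA : (oneOplus X * Umat m) 0 j = Umat m 0 j := by
      rw [Matrix.mul_apply]
      simp_rw [hA0', ite_mul, one_mul, zero_mul]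
      rw [Finset.sum_ite_eq' Finset.univ (0:Fin (m+1))]
      simp
    rw [hA, Umat_symm, Umat_col0]
    rw [mul_one_div, div_self hs0]
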